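/- Let q be a prime power, λ a divisor of q - 1 with 1 ≤ λ, and m ≥ 2. Let 1 ≤ s ≤ (q-1)/λ - 1, 0 ≤ t ≤ m - 2, and 1 ≤ u ≤ (q^(m-t) - 1)/λ - s·q^(m-t-1) - 1. Then the coset leader of the q-cyclotomic coset of (λu + 1)·q^(t+1) - q + λs modulo q^m - 1 is strictly greater than q^(t+1) - q + λs. -/

import Mathlib

/-- The q-cyclotomic coset of `a` modulo `N`. -/
def qCoset (q N a : ℕ) : Set ℕ := {b | ∃ j : ℕ, b = a * q ^ j % N}

/-- The coset leader: the smallest element of the q-cyclotomic coset of `a` modulo `N`. -/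
noncomputable def cosetLeader (q N a : ℕ) : ℕ := sInf (qCoset q N a)

/-- `a` is a coset leader modulo `N` if it is the minimum of its own coset. -/
def IsCosetLeader (q N a : ℕ) : Prop := a = cosetLeader q N a

lemma rot_formula (q m j v : ℕ) (hq : 1 ≤ q) (hj : j ≤ m) (hv : v < q ^ m - 1) :
    (v * q ^ j) % (q ^ m - 1) = (v % q ^ (m - j)) * q ^ j + v / q ^ (m - j) := by
  have hqk : 0 < q ^ (m - j) := Nat.pow_pos hq
  have hqm1 : 1 ≤ q ^ m := Nat.one_le_pow _ _ hq
  have hqm : q ^ (m - j) * q ^ j = q ^ m := by rw [← pow_add]; congr 1; omega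
  set k := m - j with hk
  set lo := v % q ^ k with hlo
  set hi := v / q ^ k with hhi
  have hdm : hi * q ^ k + lo = v := by rw [hhi, hlo, Nat.mul_comm] at *; exact Nat.div_add_mod v (q ^ k)
  have hlok : lo < q ^ k := Nat.mod_lt _ hqk
  have hmul : (lo * q ^ j + hi) * q ^ k = v + lo * (q ^ m - 1) := by
    have e1 : (lo * q ^ j + hi) * q ^ k = lo * (q ^ k * q ^ j) + hi * q ^ k := by ring
    rw [hqm] at e1
    have e2 : lo * (q ^ m - 1) + lo = lo * q ^ m := by
      rw [← Nat.mul_succ]; congr 1; omega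
    omega
  have hlt : lo * q ^ j + hi < q ^ m - 1 := by
    have h3 : v + lo * (q ^ m - 1) < (lo + 1) * (q ^ m - 1) := by
      have : (lo + 1) * (q ^ m - 1) = lo * (q ^ m - 1) + (q ^ m - 1) := by ring
      omega
    have h4 : (lo + 1) * (q ^ m - 1) ≤ q ^ k * (q ^ m - 1) :=
      Nat.mul_le_mul_right _ (by omega)
    have h5 : (lo * q ^ j + hi) * q ^ k < (q ^ m - 1) * q ^ k := by
      rw [hmul]
      calc v + lo * (q ^ m - 1) < (lo + 1) * (q ^ m - 1) := h3
        _ ≤ q ^ k * (q ^ m - 1) := h4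
        _ = (q ^ m - 1) * q ^ k := by ring
    exact Nat.lt_of_mul_lt_mul_right h5
  have hexp : v * q ^ j = hi * (q ^ m - 1) + (lo * q ^ j + hi) := by
    have e1 : v * q ^ j = hi * (q ^ k * q ^ j) + lo * q ^ j := by
      rw [← hdm]; ring
    rw [hqm] at e1
    have e2 : hi * (q ^ m - 1) + hi = hi * q ^ m := by
      rw [← Nat.mul_succ]; congr 1; omega
    omega
  rw [hexp]
  rw [Nat.add_comm, Nat.add_mul_mod_self_right]
  exact Nat.mod_eq_of_lt hlt

lemma shiftBound (q m t j c h A' : ℕ) (hq : 3 ≤ q) (htm : t + 2 ≤ m) (hj : j < m)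
    (hc : 1 ≤ c) (hch : c + h + 1 ≤ q) (hA' : A' < q ^ (m - t - 1)) (hpos : 1 ≤ A' + h)
    (hv : A' * q ^ (t + 1) + (q ^ (t + 1) - q + c + h) < q ^ m - 1) :
    q ^ (t + 1) - q + c <
      (A' * q ^ (t + 1) + (q ^ (t + 1) - q + c + h)) * q ^ j % (q ^ m - 1) := by
  have hPq : q ≤ q ^ (t + 1) := Nat.le_self_pow (by omega) q
  set v := A' * q ^ (t + 1) + (q ^ (t + 1) - q + c + h) with hvdef
  rw [rot_formula q m j v (by omega) (le_of_lt hj) hv]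
  have hvmodP : v % q ^ (t + 1) = q ^ (t + 1) - q + c + h := by
    rw [hvdef, Nat.add_comm, Nat.add_mul_mod_self_right]
    exact Nat.mod_eq_of_lt (by omega)
  rcases Nat.eq_zero_or_pos j with hj0 | hj1
  · subst hj0
    have hvm : v < q ^ m := by omega
    simp only [Nat.sub_zero, pow_zero, mul_one]
    rw [Nat.mod_eq_of_lt hvm, Nat.div_eq_of_lt hvm]
    have h1 : 1 ≤ A' * q ^ (t + 1) + h := by
      rcases Nat.eq_zero_or_pos h with h0 | h0
      · have hA1 : 1 ≤ A' := by omega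
        have : 1 * 1 ≤ A' * q ^ (t + 1) := Nat.mul_le_mul hA1 (by omega)
        omega
      · omega
    omega
  · by_cases hcase : t + 1 ≤ m - j
    · -- low part keeps all bottom t+1 digits
      have hdvd : q ^ (t + 1) ∣ q ^ (m - j) := pow_dvd_pow q hcase
      have hlo1 : v % q ^ (t + 1) = (v % q ^ (m - j)) % q ^ (t + 1) :=
        (Nat.mod_mod_of_dvd v hdvd).symm
      have hlo : q ^ (t + 1) - q + c + h ≤ v % q ^ (m - j) := by
        rw [← hvmodP, hlo1]; exact Nat.mod_le _ _
      have hqj : q ≤ q ^ j := Nat.le_self_pow (by omega) q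
      calc q ^ (t + 1) - q + c < (q ^ (t + 1) - q + c) * 2 := by omega
        _ ≤ (v % q ^ (m - j)) * q ^ j := Nat.mul_le_mul (by omega) (by omega)
        _ ≤ _ := Nat.le_add_right _ _
    · -- shift out: value ≥ q^(m-1)
      have hk1 : 1 ≤ m - j := by omega
      have hkt : m - j ≤ t := by omega
      have hdvd : q ^ (m - j) ∣ q ^ (t + 1) := pow_dvd_pow q (by omega)
      have hlo2 : v % q ^ (m - j) = (v % q ^ (t + 1)) % q ^ (m - j) :=
        (Nat.mod_mod_of_dvd v hdvd).symm
      have hqk : q ≤ q ^ (m - j) := Nat.le_self_pow (by omega) q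
      have e2 : q ^ (m - j) * (q ^ (t + 1 - (m - j)) - 1) + q ^ (m - j) = q ^ (t + 1) := by
        rw [← Nat.mul_succ]
        have h1 : 1 ≤ q ^ (t + 1 - (m - j)) := Nat.one_le_pow _ _ (by omega)
        have h2 : q ^ (m - j) * q ^ (t + 1 - (m - j)) = q ^ (t + 1) := by
          rw [← pow_add]; congr 1; omega
        calc q ^ (m - j) * (q ^ (t + 1 - (m - j)) - 1 + 1) = q ^ (m - j) * q ^ (t + 1 - (m - j)) := by
              congr 1; omega
          _ = q ^ (t + 1) := h2
      have hmodval : (q ^ (t + 1) - q + c + h) % q ^ (m - j) = q ^ (m - j) - q + c + h := by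
        have hlt : q ^ (m - j) - q + c + h < q ^ (m - j) := by omega
        have heq : q ^ (t + 1) - q + c + h =
            q ^ (m - j) * (q ^ (t + 1 - (m - j)) - 1) + (q ^ (m - j) - q + c + h) := by omega
        rw [heq, Nat.mul_add_mod, Nat.mod_eq_of_lt hlt]
      have hloval : v % q ^ (m - j) = q ^ (m - j) - q + c + h := by
        rw [hlo2, hvmodP, hmodval]
      have hlo_ge : q ^ (m - j - 1) ≤ v % q ^ (m - j) := by
        rw [hloval]
        rcases Nat.lt_or_ge (m - j) 2 with h2 | h2
        · have : m - j = 1 := by omega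
          rw [this]; simp; omega
        · have e3 : q ^ (m - j - 1) * q = q ^ (m - j) := by
            rw [← pow_succ]; congr 1; omega
          have e4 : q ≤ q ^ (m - j - 1) := Nat.le_self_pow (by omega) q
          have e5 : q ^ (m - j - 1) * 3 ≤ q ^ (m - j - 1) * q := Nat.mul_le_mul_left _ hq
          omega
      have hfin : q ^ (m - 1) ≤ (v % q ^ (m - j)) * q ^ j := by
        have e6 : q ^ (m - j - 1) * q ^ j = q ^ (m - 1) := by
          rw [← pow_add]; congr 1; omega
        calc q ^ (m - 1) = q ^ (m - j - 1) * q ^ j := e6.symm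
          _ ≤ (v % q ^ (m - j)) * q ^ j := Nat.mul_le_mul_right _ hlo_ge
      have e7 : q ^ (t + 1) ≤ q ^ (m - 1) :=
        Nat.pow_le_pow_right (by omega) (by omega)
      calc q ^ (t + 1) - q + c < q ^ (t + 1) := by omega
        _ ≤ q ^ (m - 1) := e7
        _ ≤ (v % q ^ (m - j)) * q ^ j := hfin
        _ ≤ _ := Nat.le_add_right _ _

theorem stmt_7 (q m lam s t u : ℕ) (hq : IsPrimePow q) (hl : lam ∣ q - 1)
    (hl1 : 1 ≤ lam) (hl2 : lam < q - 1) (hm : 2 ≤ m)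
    (hs1 : 1 ≤ s) (hs2 : s ≤ (q - 1) / lam - 1) (ht : t ≤ m - 2)
    (hu1 : 1 ≤ u) (hu2 : u ≤ (q ^ (m - t) - 1) / lam - s * q ^ (m - t - 1) - 1) :
    q ^ (t + 1) - q + lam * s <
      cosetLeader q (q ^ m - 1) ((lam * u + 1) * q ^ (t + 1) - q + lam * s) := by
  have hq3 : 3 ≤ q := by omega
  have htm : t + 2 ≤ m := by omega
  have hPq : q ≤ q ^ (t + 1) := Nat.le_self_pow (by omega) q
  have hQpos : 0 < q ^ (m - t - 1) := Nat.pow_pos (by omega)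
  have hqm1 : 1 ≤ q ^ m := Nat.one_le_pow _ _ (by omega)
  have hqm2 : q ^ 2 ≤ q ^ m := Nat.pow_le_pow_right (by omega) (by omega)
  have hq2 : 9 ≤ q ^ 2 := by nlinarith
  -- c = lam * s bound
  have hXdiv : lam * ((q - 1) / lam) = q - 1 := Nat.mul_div_cancel' hl
  have hX1 : 0 < (q - 1) / lam := Nat.div_pos (Nat.le_of_dvd (by omega) hl) (by omega)
  have hs' : s + 1 ≤ (q - 1) / lam := by omega
  have hcs : lam * s + lam ≤ q - 1 := by
    calc lam * s + lam = lam * (s + 1) := by ring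
      _ ≤ lam * ((q - 1) / lam) := Nat.mul_le_mul_left _ hs'
      _ = q - 1 := hXdiv
  have hc1 : 1 ≤ lam * s := Nat.one_le_iff_ne_zero.mpr (by positivity)
  -- A bound
  have hdl : lam ∣ q ^ (m - t) - 1 := by
    refine hl.trans ?_
    have := Nat.sub_dvd_pow_sub_pow q 1 (m - t)
    simpa using this
  have hDdiv : lam * ((q ^ (m - t) - 1) / lam) = q ^ (m - t) - 1 := Nat.mul_div_cancel' hdl
  have hD1 : u + s * q ^ (m - t - 1) + 1 ≤ (q ^ (m - t) - 1) / lam := by omega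
  have hQq : q ^ (m - t - 1) * q = q ^ (m - t) := by rw [← pow_succ]; congr 1; omega
  have hAb : lam * u + lam * s * q ^ (m - t - 1) + lam ≤ q ^ (m - t - 1) * q - 1 := by
    rw [hQq]
    calc lam * u + lam * s * q ^ (m - t - 1) + lam
        = lam * (u + s * q ^ (m - t - 1) + 1) := by ring
      _ ≤ lam * ((q ^ (m - t) - 1) / lam) := Nat.mul_le_mul_left _ hD1
      _ = q ^ (m - t) - 1 := hDdiv
  have hlu1 : 1 ≤ lam * u := Nat.one_le_iff_ne_zero.mpr (by positivity)
  -- decomposition of lam * u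
  obtain ⟨H, A', hdm, hA'Q⟩ :
      ∃ H A', H * q ^ (m - t - 1) + A' = lam * u ∧ A' < q ^ (m - t - 1) :=
    ⟨lam * u / q ^ (m - t - 1), lam * u % q ^ (m - t - 1),
      by rw [Nat.mul_comm]; exact Nat.div_add_mod _ _, Nat.mod_lt _ hQpos⟩
  -- H + lam*s ≤ q - 1
  have hmulsQ : lam * s * q ^ (m - t - 1) = (lam * s) * q ^ (m - t - 1) := by ring
  have hhc : lam * s + H + 1 ≤ q := by
    have h1 : (H + lam * s) * q ^ (m - t - 1) < q * q ^ (m - t - 1) := by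
      have e1 : (H + lam * s) * q ^ (m - t - 1)
          = H * q ^ (m - t - 1) + (lam * s) * q ^ (m - t - 1) := by ring
      have e2 : q * q ^ (m - t - 1) = q ^ (m - t - 1) * q := by ring
      omega
    have := Nat.lt_of_mul_lt_mul_right h1
    omega
  -- v < q^m - 1
  have hQP : q ^ (m - t - 1) * q ^ (t + 1) = q ^ m := by rw [← pow_add]; congr 1; omega
  have hvlt : A' * q ^ (t + 1) + (q ^ (t + 1) - q + lam * s + H) < q ^ m - 1 := by
    rcases Nat.lt_or_ge (lam * s + H) (q - 1) with hcq | hcq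
    · have e1 : A' * q ^ (t + 1) ≤ (q ^ (m - t - 1) - 1) * q ^ (t + 1) :=
        Nat.mul_le_mul_right _ (by omega)
      have e2 : (q ^ (m - t - 1) - 1) * q ^ (t + 1) + q ^ (t + 1) = q ^ m := by
        rw [← Nat.succ_mul, show (q ^ (m - t - 1) - 1).succ = q ^ (m - t - 1) from by omega,
          hQP]
      omega
    · have hceq : lam * s + H = q - 1 := by omega
      have e3 : H * q ^ (m - t - 1) + (lam * s) * q ^ (m - t - 1)
          = (q - 1) * q ^ (m - t - 1) := by rw [← Nat.add_mul]; congr 1; omega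
      have e4 : (q - 1) * q ^ (m - t - 1) + q ^ (m - t - 1) = q ^ (m - t - 1) * q := by
        rw [← Nat.succ_mul, show (q - 1).succ = q from by omega]; ring
      have hA'2 : A' + lam ≤ q ^ (m - t - 1) - 1 := by omega
      have e1 : A' * q ^ (t + 1) ≤ (q ^ (m - t - 1) - 2) * q ^ (t + 1) :=
        Nat.mul_le_mul_right _ (by omega)
      have e2 : (q ^ (m - t - 1) - 2) * q ^ (t + 1) + 2 * q ^ (t + 1) = q ^ m := by
        rw [← Nat.add_mul, show q ^ (m - t - 1) - 2 + 2 = q ^ (m - t - 1) from by omega, hQP]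
      omega
  -- 1 ≤ A' + H
  have hpos : 1 ≤ A' + H := by
    by_contra hcon
    push_neg at hcon
    have h0 : A' = 0 ∧ H = 0 := by omega
    rw [h0.1, h0.2] at hdm
    simp at hdm
    omega
  -- the decomposition a = H * (q^m - 1) + v
  have ha : (lam * u + 1) * q ^ (t + 1) - q + lam * s
      = H * (q ^ m - 1) + (A' * q ^ (t + 1) + (q ^ (t + 1) - q + lam * s + H)) := by
    have e1 : (lam * u + 1) * q ^ (t + 1) = (lam * u) * q ^ (t + 1) + q ^ (t + 1) := by ring
    have e2 : (lam * u) * q ^ (t + 1)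
        = H * (q ^ (m - t - 1) * q ^ (t + 1)) + A' * q ^ (t + 1) := by
      rw [← hdm]; ring
    rw [hQP] at e2
    have e4 : H * (q ^ m - 1) + H = H * q ^ m := by
      rw [← Nat.mul_succ, show (q ^ m - 1).succ = q ^ m from by omega]
    omega
  -- modular congruence
  have hmodeq : ∀ j : ℕ, ((lam * u + 1) * q ^ (t + 1) - q + lam * s) * q ^ j % (q ^ m - 1)
      = (A' * q ^ (t + 1) + (q ^ (t + 1) - q + lam * s + H)) * q ^ (j % m) % (q ^ m - 1) := by
    intro j
    have h1 : q ^ m ≡ 1 [MOD q ^ m - 1] := ((Nat.modEq_iff_dvd' hqm1).mpr dvd_rfl).symm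
    have h2 : q ^ j ≡ q ^ (j % m) [MOD q ^ m - 1] := by
      conv_lhs => rw [show j = m * (j / m) + j % m from (Nat.div_add_mod j m).symm]
      rw [pow_add, pow_mul]
      calc (q ^ m) ^ (j / m) * q ^ (j % m)
          ≡ 1 ^ (j / m) * q ^ (j % m) [MOD q ^ m - 1] := ((h1.pow _).mul_right _)
        _ = q ^ (j % m) := by rw [one_pow, one_mul]
    have h3 : (lam * u + 1) * q ^ (t + 1) - q + lam * s
        ≡ A' * q ^ (t + 1) + (q ^ (t + 1) - q + lam * s + H) [MOD q ^ m - 1] := by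
      rw [ha]
      unfold Nat.ModEq
      rw [Nat.add_comm, Nat.add_mul_mod_self_right]
    exact h3.mul h2
  have hkey : ∀ j : ℕ, q ^ (t + 1) - q + lam * s <
      ((lam * u + 1) * q ^ (t + 1) - q + lam * s) * q ^ j % (q ^ m - 1) := by
    intro j
    rw [hmodeq j]
    exact shiftBound q m t (j % m) (lam * s) H A' hq3 htm (Nat.mod_lt _ (by omega))
      hc1 hhc hA'Q hpos hvlt
  have hne : (qCoset q (q ^ m - 1) ((lam * u + 1) * q ^ (t + 1) - q + lam * s)).Nonempty :=
    ⟨_, 0, rfl⟩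
  obtain ⟨j, hj⟩ := Nat.sInf_mem hne
  unfold cosetLeader
  rw [hj]
  exact hkey j
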